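/- Let Z₁, …, Z_m be independent standard Gaussian random variables and Z = Σ_{i=1}^m Z_i². Then for every c₀ ∈ (0,1), P[Z ≤ c₀·m] ≤ (c₀·e^{1−c₀})^{m/2}, and for every c₁ > 1, P[Z ≥ c₁·m] ≤ (c₁·e^{1−c₁})^{m/2}. -/

import Mathlib

open MeasureTheory ProbabilityTheory
open scoped NNReal ENNReal
open Real


lemma gauss_pdf_mul {s : ℝ} (x : ℝ) :
    gaussianPDFReal 0 1 x * Real.exp (s * x ^ 2)
      = (Real.sqrt (2 * π))⁻¹ * Real.exp (-(1/2 - s) * x ^ 2) := by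
  simp only [gaussianPDFReal, NNReal.coe_one, mul_one, sub_zero, mul_assoc, ← Real.exp_add]
  ring_nf

lemma gauss_sq_integrable {s : ℝ} (hs : s < 1/2) :
    Integrable (fun x => Real.exp (s * x ^ 2)) (gaussianReal 0 1) := by
  rw [gaussianReal_of_var_ne_zero 0 one_ne_zero]
  have hmeas : Measurable fun x => (gaussianPDFReal 0 1 x).toNNReal :=
    (measurable_gaussianPDFReal 0 1).real_toNNReal
  have : gaussianPDF 0 1 = fun x => ((gaussianPDFReal 0 1 x).toNNReal : ENNReal) := rfl
  rw [this, integrable_withDensity_iff_integrable_smul hmeas]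
  have heq : (fun x => ((gaussianPDFReal 0 1 x).toNNReal : ℝ≥0) • Real.exp (s * x ^ 2))
      = fun x => (Real.sqrt (2 * π))⁻¹ * Real.exp (-(1/2 - s) * x ^ 2) := by
    funext x
    rw [NNReal.smul_def, smul_eq_mul, Real.coe_toNNReal _ (gaussianPDFReal_nonneg 0 1 x),
      gauss_pdf_mul]
  rw [heq]
  exact (integrable_exp_neg_mul_sq (by linarith)).const_mul _

lemma gauss_sq_integral {s : ℝ} (hs : s < 1/2) :
    ∫ x, Real.exp (s * x ^ 2) ∂(gaussianReal 0 1) = (Real.sqrt (1 - 2*s))⁻¹ := by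
  have hb : (0:ℝ) < 1/2 - s := by linarith
  rw [gaussianReal_of_var_ne_zero 0 one_ne_zero]
  have hmeas : Measurable fun x => (gaussianPDFReal 0 1 x).toNNReal :=
    (measurable_gaussianPDFReal 0 1).real_toNNReal
  have : (volume.withDensity (gaussianPDF 0 1))
      = volume.withDensity (fun x => ((gaussianPDFReal 0 1 x).toNNReal : ENNReal)) := rfl
  rw [this, integral_withDensity_eq_integral_smul hmeas]
  have heq : (fun x => ((gaussianPDFReal 0 1 x).toNNReal : ℝ≥0) • Real.exp (s * x ^ 2))
      = fun x => (Real.sqrt (2 * π))⁻¹ * Real.exp (-(1/2 - s) * x ^ 2) := by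
    funext x
    rw [NNReal.smul_def, smul_eq_mul, Real.coe_toNNReal _ (gaussianPDFReal_nonneg 0 1 x),
      gauss_pdf_mul]
  rw [heq, integral_const_mul, integral_gaussian]
  have h2 : (0:ℝ) < 1 - 2 * s := by linarith
  have hπ : π ≠ 0 := pi_ne_zero
  have hb' : (1/2 - s) ≠ 0 := hb.ne'
  have h2' : (1:ℝ) - 2*s ≠ 0 := h2.ne'
  rw [← Real.sqrt_inv (2*π), ← Real.sqrt_inv (1 - 2*s), ← Real.sqrt_mul (by positivity)]
  congr 1
  field_simp

lemma chernoff_alg {c : ℝ} (hc : 0 < c) (m : ℕ) :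
    Real.exp (-((1 - 1/c)/2) * (c * m)) * ((Real.sqrt (1 - 2 * ((1 - 1/c)/2)))⁻¹) ^ m
      = (c * Real.exp (1 - c)) ^ ((m:ℝ)/2) := by
  have hc' : c ≠ 0 := hc.ne'
  have h1 : 1 - 2 * ((1 - 1/c)/2) = c⁻¹ := by field_simp; ring
  rw [h1, Real.sqrt_inv, inv_inv]
  have hexp : -((1 - 1/c)/2) * (c * m) = (1 - c) * ((m:ℝ)/2) := by field_simp; ring
  rw [hexp, Real.mul_rpow hc.le (Real.exp_nonneg _), Real.exp_mul,
    Real.sqrt_eq_rpow, ← Real.rpow_natCast (c ^ (1/(2:ℝ))) m, ← Real.rpow_mul hc.le]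
  ring_nf

lemma mgf_sq {Ω : Type*} [MeasureSpace Ω] (Z : Ω → ℝ) (hZ : Measurable Z)
    (hg : Measure.map Z ℙ = gaussianReal 0 1) {t : ℝ} (ht : t < 1/2) :
    mgf (fun ω => Z ω ^ 2) ℙ t = (Real.sqrt (1 - 2*t))⁻¹ := by
  have hsm : AEStronglyMeasurable (fun x : ℝ => Real.exp (t * x ^ 2)) (Measure.map Z ℙ) :=
    ((measurable_id.pow_const 2).const_mul t).exp.aestronglyMeasurable
  rw [mgf, ← integral_map hZ.aemeasurable hsm, hg, gauss_sq_integral ht]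

lemma exp_sq_integrable {Ω : Type*} [MeasureSpace Ω] (Z : Ω → ℝ) (hZ : Measurable Z)
    (hg : Measure.map Z ℙ = gaussianReal 0 1) {t : ℝ} (ht : t < 1/2) :
    Integrable (fun ω => Real.exp (t * Z ω ^ 2)) ℙ := by
  have h := gauss_sq_integrable ht
  rw [← hg] at h
  exact (integrable_map_measure ((measurable_id.pow_const 2).const_mul
    t).exp.aestronglyMeasurable hZ.aemeasurable).mp h

/-- Chi-square tail bounds: if `Z₁, …, Z_m` are i.i.d. standard
Gaussians and `Z = Σ Zᵢ²`, then `P[Z ≤ c₀ m] ≤ (c₀ e^{1−c₀})^{m/2}` for `0 < c₀ < 1`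
and `P[Z ≥ c₁ m] ≤ (c₁ e^{1−c₁})^{m/2}` for `c₁ > 1`. -/
theorem chi_square_tail_bounds
    {Ω : Type*} [MeasureSpace Ω] (hprob : IsProbabilityMeasure (ℙ : Measure Ω))
    (m : ℕ) (Z : Fin m → Ω → ℝ)
    (hmeas : ∀ i, Measurable (Z i))
    (hindep : iIndepFun Z ℙ)
    (hgauss : ∀ i, Measure.map (Z i) ℙ = gaussianReal 0 1)
    (c₀ c₁ : ℝ) (hc₀ : 0 < c₀) (hc₀' : c₀ < 1) (hc₁ : 1 < c₁) :
    ℙ {ω | (∑ i, Z i ω ^ 2) ≤ c₀ * m} ≤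
      ENNReal.ofReal ((c₀ * Real.exp (1 - c₀)) ^ ((m : ℝ) / 2)) ∧
    ℙ {ω | c₁ * m ≤ (∑ i, Z i ω ^ 2)} ≤
      ENNReal.ofReal ((c₁ * Real.exp (1 - c₁)) ^ ((m : ℝ) / 2)) := by
  classical
  set X : Fin m → Ω → ℝ := fun i ω => Z i ω ^ 2 with hX
  have hXmeas : ∀ i, Measurable (X i) := fun i => (hmeas i).pow_const 2
  have hXindep : iIndepFun X ℙ :=
    hindep.comp (fun _ x => x ^ 2) (fun _ => measurable_id.pow_const 2)
  have hsum : ∀ ω, (∑ i, Z i ω ^ 2) = (∑ i, X i) ω := fun ω => by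
    simp [X, Finset.sum_apply]
  have hmgf : ∀ t : ℝ, t < 1/2 → mgf (∑ i, X i) ℙ t = ((Real.sqrt (1 - 2*t))⁻¹) ^ m := by
    intro t ht
    rw [hXindep.mgf_sum hXmeas,
      Finset.prod_congr rfl (fun i _ => mgf_sq (Z i) (hmeas i) (hgauss i) ht),
      Finset.prod_const, Finset.card_univ, Fintype.card_fin]
  have hint : ∀ t : ℝ, t < 1/2 → Integrable (fun ω => Real.exp (t * (∑ i, X i) ω)) ℙ :=
    fun t ht => hXindep.integrable_exp_mul_sum hXmeas
      (fun i _ => exp_sq_integrable (Z i) (hmeas i) (hgauss i) ht)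
  constructor
  · set t := (1 - 1/c₀)/2 with htdef
    have h1c : 1 < 1/c₀ := by rw [lt_div_iff₀ hc₀]; linarith
    have ht0 : t ≤ 0 := by rw [htdef]; linarith
    have htlt : t < 1/2 := by linarith
    have hb := measure_le_le_exp_mul_mgf (μ := ℙ) (X := ∑ i, X i) (c₀ * m) ht0 (hint t htlt)
    rw [hmgf t htlt] at hb
    have heqset : {ω : Ω | (∑ i, Z i ω ^ 2) ≤ c₀ * m} = {ω | (∑ i, X i) ω ≤ c₀ * m} := by
      ext ω; simp only [Set.mem_setOf_eq, hsum ω]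
    rw [heqset]
    calc ℙ {ω | (∑ i, X i) ω ≤ c₀ * m}
        = ENNReal.ofReal (ℙ {ω | (∑ i, X i) ω ≤ c₀ * m}).toReal :=
          (ENNReal.ofReal_toReal (measure_ne_top _ _)).symm
      _ ≤ ENNReal.ofReal (Real.exp (-t * (c₀ * m)) * ((Real.sqrt (1 - 2*t))⁻¹) ^ m) :=
          ENNReal.ofReal_le_ofReal hb
      _ = ENNReal.ofReal ((c₀ * Real.exp (1 - c₀)) ^ ((m : ℝ) / 2)) := by
          rw [htdef, chernoff_alg hc₀ m]
  · set t := (1 - 1/c₁)/2 with htdef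
    have hc1 : (0:ℝ) < c₁ := lt_trans one_pos hc₁
    have h1c : 1/c₁ < 1 := by rw [div_lt_one hc1]; exact hc₁
    have h1c' : 0 < 1/c₁ := by positivity
    have ht0 : 0 ≤ t := by rw [htdef]; linarith
    have htlt : t < 1/2 := by rw [htdef]; linarith
    have hb := measure_ge_le_exp_mul_mgf (μ := ℙ) (X := ∑ i, X i) (c₁ * m) ht0 (hint t htlt)
    rw [hmgf t htlt] at hb
    have heqset : {ω : Ω | c₁ * m ≤ (∑ i, Z i ω ^ 2)} = {ω | c₁ * m ≤ (∑ i, X i) ω} := by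
      ext ω; simp only [Set.mem_setOf_eq, hsum ω]
    rw [heqset]
    calc ℙ {ω | c₁ * m ≤ (∑ i, X i) ω}
        = ENNReal.ofReal (ℙ {ω | c₁ * m ≤ (∑ i, X i) ω}).toReal :=
          (ENNReal.ofReal_toReal (measure_ne_top _ _)).symm
      _ ≤ ENNReal.ofReal (Real.exp (-t * (c₁ * m)) * ((Real.sqrt (1 - 2*t))⁻¹) ^ m) :=
          ENNReal.ofReal_le_ofReal hb
      _ = ENNReal.ofReal ((c₁ * Real.exp (1 - c₁)) ^ ((m : ℝ) / 2)) := by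
          rw [htdef, chernoff_alg hc1 m]
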